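/- Let k ≥ 1 be an integer, let a : ℕ × ℕ → O_L, and for s, z ∈ m_L set F(s, z) = Σ_{m,n ≥ 0} a_{m,n} s^m z^n/(m! n!) (this converges in L). Suppose s₀ ∈ m_L is such that for some n the coefficient c_n(s₀) = Σ_{m≥0} a_{m,n} s₀^m/m! of the specialization satisfies |c_n(s₀)| > p^{-k}. Then there exists a natural number N such that for every s ∈ m_L with |s − s₀| ≤ p^{-k}, the set {z ∈ m_L : F(s, z) = 0} has at most N elements; in particular, for every such s the function z ↦ F(s, z) is not identically zero on m_L. -/

import Mathlib

open Filter Topology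

set_option linter.unusedSectionVars false
set_option maxHeartbeats 1000000

namespace St8

variable {L : Type*} [NormedField L] [IsUltrametricDist L] [CompleteSpace L]

lemma tendsto_addfn : Tendsto (fun q : ℕ × ℕ => q.1 + q.2) cofinite atTop := by
  refine tendsto_atTop.2 fun K => ?_
  rw [eventually_cofinite]
  refine ((Set.finite_Iio K).prod (Set.finite_Iio K)).subset ?_
  intro q hq
  simp only [Set.mem_setOf_eq, not_le] at hq
  exact ⟨by simp [Set.mem_Iio]; omega, by simp [Set.mem_Iio]; omega⟩

lemma summable_of_bound {F : ℕ × ℕ → L} {B : ℕ → ℝ} (hB : Tendsto B atTop (𝓝 0))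
    (h : ∀ q : ℕ × ℕ, ‖F q‖ ≤ B (q.1 + q.2)) : Summable F := by
  apply NonarchimedeanAddGroup.summable_of_tendsto_cofinite_zero
  rw [tendsto_zero_iff_norm_tendsto_zero]
  exact squeeze_zero' (Eventually.of_forall fun q => norm_nonneg _)
    (Eventually.of_forall h) (hB.comp tendsto_addfn)

lemma norm_tsum_lt {f : ℕ → L} (hf : Summable f) {c : ℝ} (hc : 0 < c)
    (h : ∀ i, ‖f i‖ < c) : ‖∑' i, f i‖ < c := by
  have h0 : Tendsto (fun n => ‖f n‖) atTop (𝓝 0) := by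
    rw [← tendsto_zero_iff_norm_tendsto_zero]; exact hf.tendsto_atTop_zero
  obtain ⟨M, hM⟩ : ∃ M, ∀ n ≥ M, ‖f n‖ < c / 2 := by
    have := Metric.tendsto_atTop.1 h0 (c / 2) (half_pos hc)
    obtain ⟨M, hM⟩ := this
    exact ⟨M, fun n hn => by
      have := hM n hn
      rwa [Real.dist_eq, sub_zero, abs_of_nonneg (norm_nonneg _)] at this⟩
  rw [← hf.sum_add_tsum_nat_add M]
  refine lt_of_le_of_lt (IsUltrametricDist.norm_add_le_max _ _) (max_lt ?_ ?_)
  · obtain ⟨i, hi⟩ := IsUltrametricDist.exists_norm_finset_sum_le (Finset.range M) f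
    exact hi.2.trans_lt (h i)
  · refine lt_of_le_of_lt
      (IsUltrametricDist.norm_tsum_le_of_forall_le_of_nonneg (half_pos hc).le
        fun i => (hM (i + M) (by omega)).le) (half_lt_self hc)

lemma norm_add_eq_left {x y : L} (h : ‖x‖ < ‖y‖) : ‖y + x‖ = ‖y‖ := by
  rw [IsUltrametricDist.norm_add_eq_max_of_norm_ne_norm (x := y) (y := x) (ne_of_gt h)]
  exact max_eq_left h.le

lemma summable_pow {r : ℝ} {b : ℕ → L}
    (hb : Tendsto (fun n => ‖b n‖ * r ^ n) atTop (𝓝 0)) {z : L} (hz : ‖z‖ ≤ r) :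
    Summable (fun n => b n * z ^ n) := by
  apply NonarchimedeanAddGroup.summable_of_tendsto_cofinite_zero
  rw [Nat.cofinite_eq_atTop, tendsto_zero_iff_norm_tendsto_zero]
  refine squeeze_zero (fun n => norm_nonneg _) (fun n => ?_) hb
  rw [norm_mul, norm_pow]
  gcongr

lemma nozero {r : ℝ} (hr : 0 < r) {b : ℕ → L}
    (hb : Tendsto (fun n => ‖b n‖ * r ^ n) atTop (𝓝 0))
    (hdom : ∀ m, 0 < m → ‖b m‖ * r ^ m < ‖b 0‖) {z : L} (hz : ‖z‖ ≤ r) :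
    ∑' n, b n * z ^ n ≠ 0 := by
  have hs := summable_pow hb hz
  have h0 : 0 < ‖b 0‖ := lt_of_le_of_lt (by positivity) (hdom 1 one_pos)
  rw [hs.tsum_eq_zero_add]
  intro hcontra
  have htail : ‖∑' n : ℕ, b (n + 1) * z ^ (n + 1)‖ < ‖b 0‖ := by
    refine norm_tsum_lt ((summable_nat_add_iff (f := fun n => b n * z ^ n) 1).2 hs) h0 fun i => ?_
    refine lt_of_le_of_lt ?_ (hdom (i + 1) (by omega))
    rw [norm_mul, norm_pow]
    gcongr
  rw [pow_zero, mul_one] at hcontra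
  have : b 0 = -∑' n : ℕ, b (n + 1) * z ^ (n + 1) := eq_neg_of_add_eq_zero_left hcontra
  rw [this, norm_neg] at h0
  rw [this, norm_neg] at htail
  exact lt_irrefl _ htail


lemma factor {r : ℝ} (hr : 0 < r) {b : ℕ → L}
    (hb : Tendsto (fun n => ‖b n‖ * r ^ n) atTop (𝓝 0))
    {z₀ : L} (hz₀ : ‖z₀‖ ≤ r) (hroot : ∑' n, b n * z₀ ^ n = 0)
    {z : L} (hz : ‖z‖ ≤ r) :
    (∑' j : ℕ, (∑' i : ℕ, b (j + 1 + i) * z₀ ^ i) * z ^ j) * (z - z₀) = ∑' n, b n * z ^ n := by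
  set u : ℕ → ℝ := fun n => ‖b n‖ * r ^ n with hu
  set h : ℕ × ℕ → L := fun q => b (q.1 + q.2) * z ^ q.1 * z₀ ^ q.2 with hh
  have hbound : ∀ q : ℕ × ℕ, ‖h q‖ ≤ u (q.1 + q.2) := by
    intro q
    simp only [hh, hu, norm_mul, norm_pow, pow_add, mul_assoc]
    gcongr <;> simp [norm_nonneg]
  have Sh : Summable h := summable_of_bound hb hbound
  set h₁ : ℕ × ℕ → L := fun q => h (q.1 + 1, q.2) with hh₁
  set h₂ : ℕ × ℕ → L := fun q => h (q.1, q.2 + 1) with hh₂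
  have inj₁ : Function.Injective (fun q : ℕ × ℕ => (q.1 + 1, q.2)) := by
    intro q q' e; simp only [Prod.mk.injEq] at e; exact Prod.ext (by omega) e.2
  have inj₂ : Function.Injective (fun q : ℕ × ℕ => (q.1, q.2 + 1)) := by
    intro q q' e; simp only [Prod.mk.injEq] at e; exact Prod.ext e.1 (by omega)
  have S1 : Summable h₁ := Sh.comp_injective inj₁
  have S2 : Summable h₂ := Sh.comp_injective inj₂
  set w : ℕ × ℕ → L := fun q => (b (q.1 + 1 + q.2) * z₀ ^ q.2) * z ^ q.1 with hw
  have Sw : Summable w := by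
    refine summable_of_bound (B := fun l => u (l + 1) / r) ?_ ?_
    · have := (hb.comp (tendsto_add_atTop_nat 1)).div_const r
      rwa [zero_div] at this
    · intro q
      have h1 : ‖w q‖ ≤ ‖b (q.1 + 1 + q.2)‖ * r ^ q.2 * r ^ q.1 := by
        simp only [hw, norm_mul, norm_pow]
        gcongr
      refine h1.trans (le_of_eq ?_)
      have : q.1 + 1 + q.2 = q.1 + q.2 + 1 := by omega
      rw [this, hu]
      have hr' : r ≠ 0 := ne_of_gt hr
      field_simp
      ring
  -- fiberwise summabilities
  have SG : Summable (fun j => ∑' i, h (j, i)) :=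
    (Sh.hasSum.prod_fiberwise (fun j => (Sh.prod_factor j).hasSum)).summable
  have SG2 : Summable (fun j => ∑' i, h₂ (j, i)) :=
    (S2.hasSum.prod_fiberwise (fun j => (S2.prod_factor j).hasSum)).summable
  have Sd : Summable (fun j => h (j, 0)) := Sh.comp_injective (fun j j' e => by
    simpa using congrArg Prod.fst e)
  -- Key A
  have keyA : ∑' q, h q = (∑' i, h (0, i)) + ∑' q, h₁ q := by
    rw [Sh.tsum_prod' (fun j => Sh.prod_factor j), SG.tsum_eq_zero_add]
    congr 1
    exact (S1.tsum_prod' (fun j => S1.prod_factor j)).symm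
  -- Key B
  have keyB : ∑' q, h q = (∑' j, h (j, 0)) + ∑' q, h₂ q := by
    rw [Sh.tsum_prod' (fun j => Sh.prod_factor j)]
    have : ∀ j : ℕ, ∑' i, h (j, i) = h (j, 0) + ∑' i, h₂ (j, i) := fun j =>
      (Sh.prod_factor j).tsum_eq_zero_add
    rw [tsum_congr this, Sd.tsum_add SG2]
    congr 1
    exact (S2.tsum_prod' (fun j => S2.prod_factor j)).symm
  have hzrow : ∑' j, h (j, 0) = ∑' n, b n * z ^ n := by
    apply tsum_congr; intro j; simp [hh]
  have hzcol : ∑' i, h (0, i) = 0 := by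
    rw [← hroot]; apply tsum_congr; intro i; simp [hh]
  -- main chain
  have lhs1 : ∀ j : ℕ, (∑' i : ℕ, b (j + 1 + i) * z₀ ^ i) * z ^ j = ∑' i, w (j, i) := by
    intro j
    rw [← tsum_mul_right]
  have lhs2 : ∑' j : ℕ, (∑' i : ℕ, b (j + 1 + i) * z₀ ^ i) * z ^ j = ∑' q, w q := by
    rw [tsum_congr lhs1]
    exact (Sw.tsum_prod' (fun j => Sw.prod_factor j)).symm
  rw [lhs2, ← tsum_mul_right]
  have hdiff : ∀ q : ℕ × ℕ, w q * (z - z₀) = h₁ q - h₂ q := by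
    intro q
    simp only [hw, hh₁, hh₂, hh]
    have e1 : q.1 + 1 + q.2 = q.1 + (q.2 + 1) := by omega
    rw [← e1]
    ring
  rw [tsum_congr hdiff, S1.tsum_sub S2]
  have e1 : ∑' q, h₁ q = ∑' q, h q - ∑' i, h (0, i) := by rw [keyA]; ring
  have e2 : ∑' q, h₂ q = ∑' q, h q - ∑' j, h (j, 0) := by rw [keyB]; ring
  rw [e1, e2, hzrow, hzcol]
  ring


lemma strassman {r : ℝ} (hr : 0 < r) (N : ℕ) :
    ∀ b : ℕ → L, Tendsto (fun n => ‖b n‖ * r ^ n) atTop (𝓝 0) →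
    (∃ n, n ≤ N ∧ (∀ m, m ≤ N → ‖b m‖ * r ^ m ≤ ‖b n‖ * r ^ n) ∧
      ∀ m, n < m → ‖b m‖ * r ^ m < ‖b n‖ * r ^ n) →
    {z : L | ‖z‖ ≤ r ∧ ∑' n, b n * z ^ n = 0}.Finite ∧
      {z : L | ‖z‖ ≤ r ∧ ∑' n, b n * z ^ n = 0}.ncard ≤ N := by
  induction N with
  | zero =>
    rintro b hb ⟨n, hn0, -, hstrict⟩
    obtain rfl : n = 0 := Nat.le_zero.mp hn0
    have hempty : {z : L | ‖z‖ ≤ r ∧ ∑' n, b n * z ^ n = 0} = ∅ := by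
      ext z
      simp only [Set.mem_setOf_eq, Set.mem_empty_iff_false, iff_false, not_and]
      intro hz
      exact nozero hr hb (fun m hm => by simpa using hstrict m hm) hz
    rw [hempty]
    simp
  | succ N IH =>
    rintro b hb ⟨n, hnN, hmax, hstrict⟩
    rcases Set.eq_empty_or_nonempty {z : L | ‖z‖ ≤ r ∧ ∑' n, b n * z ^ n = 0} with hZ | hne
    · rw [hZ]; simp
    obtain ⟨z₀, hz₀, hz₀root⟩ := hne
    cases n with
    | zero =>
      exact absurd hz₀root (nozero hr hb (fun m hm => by simpa using hstrict m hm) hz₀)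
    | succ n' =>
      set g : ℕ → L := fun j => ∑' i : ℕ, b (j + 1 + i) * z₀ ^ i with hg
      set M : ℝ := ‖b (n' + 1)‖ * r ^ (n' + 1) with hM
      have hM0 : 0 < M :=
        lt_of_le_of_lt (by positivity) (hstrict (n' + 2) (by omega))
      have hall : ∀ l, ‖b l‖ * r ^ l ≤ M := by
        intro l
        rcases le_or_gt l (N + 1) with h | h
        · exact hmax l h
        · exact (hstrict l (by omega)).le
      -- summability of the series defining g m
      have hgsum : ∀ m : ℕ, Summable (fun i : ℕ => b (m + 1 + i) * z₀ ^ i) := by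
        intro m
        apply NonarchimedeanAddGroup.summable_of_tendsto_cofinite_zero
        rw [Nat.cofinite_eq_atTop, tendsto_zero_iff_norm_tendsto_zero]
        have heq : (fun i : ℕ => ‖b (m + 1 + i)‖ * r ^ i)
            = fun i => (‖b (m + 1 + i)‖ * r ^ (m + 1 + i)) / r ^ (m + 1) := by
          funext i
          rw [pow_add]
          field_simp
          try ring
        refine squeeze_zero (g := fun i : ℕ => ‖b (m + 1 + i)‖ * r ^ i)
          (fun i => norm_nonneg _)
          (fun i => by
            rw [norm_mul, norm_pow]
            exact mul_le_mul_of_nonneg_left (pow_le_pow_left₀ (norm_nonneg _) hz₀ i)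
              (norm_nonneg _)) ?_
        rw [heq]
        have hcomp := ((hb.comp (tendsto_add_atTop_nat (m + 1))).div_const (r ^ (m + 1)))
        rw [zero_div] at hcomp
        convert hcomp using 2 with i
        simp only [Function.comp_apply]
        rw [add_comm i (m + 1)]
      -- nonstrict bound for g
      have hgle : ∀ (m : ℕ) (c : ℝ), 0 ≤ c →
          (∀ i : ℕ, ‖b (m + 1 + i)‖ * r ^ (m + 1 + i) ≤ c) → ‖g m‖ * r ^ m ≤ c / r := by
        intro m c hc hi
        have h1 : ‖g m‖ ≤ c / r ^ (m + 1) := by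
          refine IsUltrametricDist.norm_tsum_le_of_forall_le_of_nonneg (by positivity) ?_
          intro i
          rw [norm_mul, norm_pow]
          have h2 : ‖b (m + 1 + i)‖ * ‖z₀‖ ^ i ≤ ‖b (m + 1 + i)‖ * r ^ i := by gcongr
          refine h2.trans ?_
          rw [le_div_iff₀ (by positivity : (0:ℝ) < r ^ (m + 1))]
          calc ‖b (m + 1 + i)‖ * r ^ i * r ^ (m + 1)
              = ‖b (m + 1 + i)‖ * r ^ (m + 1 + i) := by rw [pow_add]; ring
            _ ≤ c := hi i
        calc ‖g m‖ * r ^ m ≤ (c / r ^ (m + 1)) * r ^ m := by gcongr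
          _ = c / r := by rw [pow_succ]; field_simp
      -- strict bound for g
      have hglt : ∀ (m : ℕ) (c : ℝ), 0 < c →
          (∀ i : ℕ, ‖b (m + 1 + i)‖ * r ^ (m + 1 + i) < c) → ‖g m‖ * r ^ m < c / r := by
        intro m c hc hi
        have h1 : ‖g m‖ < c / r ^ (m + 1) := by
          refine norm_tsum_lt (hgsum m) (by positivity) ?_
          intro i
          rw [norm_mul, norm_pow]
          have h2 : ‖b (m + 1 + i)‖ * ‖z₀‖ ^ i ≤ ‖b (m + 1 + i)‖ * r ^ i := by gcongr
          refine h2.trans_lt ?_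
          rw [lt_div_iff₀ (by positivity)]
          calc ‖b (m + 1 + i)‖ * r ^ i * r ^ (m + 1)
              = ‖b (m + 1 + i)‖ * r ^ (m + 1 + i) := by rw [pow_add]; ring
            _ < c := hi i
        calc ‖g m‖ * r ^ m < (c / r ^ (m + 1)) * r ^ m := by gcongr
          _ = c / r := by rw [pow_succ]; field_simp
      -- the value at n'
      have hgn' : ‖g n'‖ = ‖b (n' + 1)‖ := by
        have hb0 : 0 < ‖b (n' + 1)‖ := by
          by_contra hcon
          push_neg at hcon
          have : ‖b (n' + 1)‖ = 0 := le_antisymm hcon (norm_nonneg _)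
          rw [hM, this, zero_mul] at hM0
          exact lt_irrefl _ hM0
        have htail : ‖∑' i : ℕ, b (n' + 1 + (i + 1)) * z₀ ^ (i + 1)‖ < ‖b (n' + 1)‖ := by
          refine norm_tsum_lt ((summable_nat_add_iff (f := fun i => b (n' + 1 + i) * z₀ ^ i) 1).2 (hgsum n')) hb0 ?_
          intro i
          rw [norm_mul, norm_pow]
          have h2 : ‖b (n' + 1 + (i + 1))‖ * ‖z₀‖ ^ (i + 1)
              ≤ ‖b (n' + 1 + (i + 1))‖ * r ^ (i + 1) := by gcongr
          refine h2.trans_lt ?_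
          have h3 := hstrict (n' + 1 + (i + 1)) (by omega)
          have h6 : ‖b (n' + 1 + (i + 1))‖ * r ^ (i + 1) * r ^ (n' + 1)
              < ‖b (n' + 1)‖ * r ^ (n' + 1) := by
            calc ‖b (n' + 1 + (i + 1))‖ * r ^ (i + 1) * r ^ (n' + 1)
                = ‖b (n' + 1 + (i + 1))‖ * r ^ (n' + 1 + (i + 1)) := by rw [pow_add]; ring
              _ < M := h3
              _ = ‖b (n' + 1)‖ * r ^ (n' + 1) := hM
          exact lt_of_mul_lt_mul_right h6 (by positivity)
        have hsplit : g n' = b (n' + 1) + ∑' i : ℕ, b (n' + 1 + (i + 1)) * z₀ ^ (i + 1) := by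
          rw [hg]
          have := (hgsum n').tsum_eq_zero_add
          simpa using this
        rw [hsplit]
        exact norm_add_eq_left htail
      have hgn'r : ‖g n'‖ * r ^ n' = M / r := by
        rw [hgn', hM, pow_succ]
        field_simp
      -- tendsto for g
      have hgtend : Tendsto (fun m => ‖g m‖ * r ^ m) atTop (𝓝 0) := by
        rw [Metric.tendsto_atTop]
        intro ε hε
        obtain ⟨K, hK⟩ : ∃ K, ∀ l ≥ K, ‖b l‖ * r ^ l < ε * r / 2 := by
          obtain ⟨K, hK⟩ := Metric.tendsto_atTop.1 hb (ε * r / 2) (by positivity)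
          refine ⟨K, fun l hl => ?_⟩
          have := hK l hl
          rwa [Real.dist_eq, sub_zero, abs_of_nonneg (by positivity)] at this
        refine ⟨K, fun m hm => ?_⟩
        rw [Real.dist_eq, sub_zero, abs_of_nonneg (by positivity)]
        have := hglt m (ε * r / 2) (by positivity) (fun i => hK (m + 1 + i) (by omega))
        calc ‖g m‖ * r ^ m < (ε * r / 2) / r := this
          _ = ε / 2 := by field_simp
          _ < ε := by linarith
      -- IH applied to g
      obtain ⟨hfin, hcard⟩ := IH g hgtend ⟨n', by omega,
        fun m _ => by rw [hgn'r]; exact hgle m M hM0.le (fun i => hall _),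
        fun m hm => by
          rw [hgn'r]
          exact hglt m M hM0 (fun i => hstrict (m + 1 + i) (by omega))⟩
      -- subset relation
      have hsub : {z : L | ‖z‖ ≤ r ∧ ∑' n, b n * z ^ n = 0}
          ⊆ insert z₀ {z : L | ‖z‖ ≤ r ∧ ∑' j, g j * z ^ j = 0} := by
        intro z hz
        rcases eq_or_ne z z₀ with rfl | hzz
        · exact Set.mem_insert _ _
        · refine Set.mem_insert_of_mem _ ⟨hz.1, ?_⟩
          have hfac := factor hr hb hz₀ hz₀root hz.1
          rw [hz.2] at hfac
          rcases mul_eq_zero.1 hfac with h | h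
          · exact h
          · exact absurd (sub_eq_zero.1 h) hzz
      refine ⟨(hfin.insert z₀).subset hsub, ?_⟩
      calc {z : L | ‖z‖ ≤ r ∧ ∑' n, b n * z ^ n = 0}.ncard
          ≤ (insert z₀ {z : L | ‖z‖ ≤ r ∧ ∑' j, g j * z ^ j = 0}).ncard :=
            Set.ncard_le_ncard hsub (hfin.insert z₀)
        _ ≤ {z : L | ‖z‖ ≤ r ∧ ∑' j, g j * z ^ j = 0}.ncard + 1 := Set.ncard_insert_le _ _
        _ ≤ N + 1 := by omega


end St8

/-- if some specialized coefficient `c_n(s₀) = Σ_m a_{m,n} s₀^m / m!` of a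
two-variable divided-power series over `O_L` has absolute value `> p^{-k}`, then there
is a uniform bound `N` on the number of zeroes `z ∈ m_L` of `z ↦ F(s, z)` for all
`s ∈ m_L` with `|s - s₀| ≤ p^{-k}`; in particular `z ↦ F(s, z)` is not identically zero
on `m_L` for such `s`. Here `p` is odd and `L/ℚ_p` is finite unramified. -/
theorem statement8 (p : ℕ) [Fact p.Prime] (hp : Odd p) (L : Type*) [NormedField L]
    [CompleteSpace L] [IsUltrametricDist L] [CharZero L]
    [Algebra ℚ_[p] L] [FiniteDimensional ℚ_[p] L]
    (hext : ∀ q : ℚ_[p], ‖algebraMap ℚ_[p] L q‖ = ‖q‖)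
    (hur : ∀ y : L, y ≠ 0 → ∃ n : ℤ, ‖y‖ = (p : ℝ) ^ n)
    (k : ℕ) (hk : 1 ≤ k)
    (a : ℕ × ℕ → L) (ha : ∀ q, ‖a q‖ ≤ 1)
    (s₀ : L) (hs₀ : ‖s₀‖ < 1)
    (hnz : ∃ n : ℕ,
      (p : ℝ) ^ (-(k : ℤ)) < ‖∑' m : ℕ, a (m, n) * s₀ ^ m / (m.factorial : L)‖) :
    ∃ N : ℕ, ∀ s : L, ‖s‖ < 1 → ‖s - s₀‖ ≤ (p : ℝ) ^ (-(k : ℤ)) →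
      ({z : L | ‖z‖ < 1 ∧
          ∑' q : ℕ × ℕ,
            a q * s ^ q.1 * z ^ q.2 / ((q.1.factorial : L) * (q.2.factorial : L)) = 0}.Finite ∧
        {z : L | ‖z‖ < 1 ∧
          ∑' q : ℕ × ℕ,
            a q * s ^ q.1 * z ^ q.2 / ((q.1.factorial : L) * (q.2.factorial : L)) = 0}.ncard ≤ N) ∧
      ∃ z : L, ‖z‖ < 1 ∧
        (∑' q : ℕ × ℕ,
          a q * s ^ q.1 * z ^ q.2 / ((q.1.factorial : L) * (q.2.factorial : L))) ≠ 0 := by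
  classical
  obtain ⟨n₀, hn₀⟩ := hnz
  have hpprime : p.Prime := Fact.out
  have hp3 : 3 ≤ p := by
    obtain ⟨t, ht⟩ := hp
    have := hpprime.two_le
    omega
  have hpR : (1 : ℝ) < p := by exact_mod_cast show (1:ℕ) < p by omega
  have hpR0 : (0 : ℝ) < p := by linarith
  have hpne : (p : ℝ) ≠ 0 := ne_of_gt hpR0
  set r : ℝ := (p : ℝ)⁻¹ with hrdef
  have hr : 0 < r := by positivity
  have hr1 : r < 1 := by
    rw [hrdef]
    exact inv_lt_one_of_one_lt₀ hpR
  have hzle : ∀ i j : ℤ, i ≤ j → (p : ℝ) ^ i ≤ (p : ℝ) ^ j :=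
    fun i j h => zpow_le_zpow_right₀ hpR.le h
  have hzlt : ∀ i j : ℤ, i < j → (p : ℝ) ^ i < (p : ℝ) ^ j :=
    fun i j h => zpow_lt_zpow_right₀ hpR h
  have hrzpow : ∀ m : ℕ, r ^ m = (p : ℝ) ^ (-(m : ℤ)) := by
    intro m
    rw [hrdef, inv_pow, ← zpow_natCast, ← zpow_neg]
  -- factorial valuation facts
  set v : ℕ → ℕ := fun m => padicValNat p m.factorial with hvdef
  have hfact : ∀ m : ℕ, ‖((m.factorial : ℕ) : L)‖ = (p : ℝ) ^ (-(v m : ℤ)) := by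
    intro m
    have h1 : ((m.factorial : ℕ) : L) = algebraMap ℚ_[p] L ((m.factorial : ℕ) : ℚ_[p]) :=
      (map_natCast _ _).symm
    have h2 : ((m.factorial : ℕ) : ℚ_[p]) ≠ 0 := Nat.cast_ne_zero.mpr m.factorial_ne_zero
    rw [h1, hext, Padic.norm_eq_zpow_neg_valuation h2, Padic.valuation_natCast]
  have hdivfact : ∀ (x : L) (m : ℕ), ‖x / (m.factorial : L)‖ = ‖x‖ * (p : ℝ) ^ (v m : ℤ) := by
    intro x m
    rw [norm_div, hfact, div_eq_mul_inv, ← zpow_neg, neg_neg]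
  have hds : ∀ m : ℕ, 1 ≤ m → 1 ≤ (p.digits m).sum := by
    intro m hm
    by_contra hcon
    push_neg at hcon
    have hz : (p.digits m).sum = 0 := by omega
    have hall := List.sum_eq_zero_iff.mp hz
    have hne : p.digits m ≠ [] := Nat.digits_ne_nil_iff_ne_zero.mpr (by omega)
    exact Nat.getLast_digit_ne_zero p (show m ≠ 0 by omega) (hall _ (List.getLast_mem hne))
  have hv2 : ∀ m : ℕ, 2 * v m ≤ m := by
    intro m
    show 2 * padicValNat p m.factorial ≤ m
    have h := sub_one_mul_padicValNat_factorial (p := p) m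
    have h2 : 2 * padicValNat p m.factorial ≤ (p - 1) * padicValNat p m.factorial :=
      Nat.mul_le_mul_right _ (by omega)
    omega
  have hv1 : ∀ m : ℕ, 1 ≤ m → 2 * v m + 1 ≤ m := by
    intro m hm
    show 2 * padicValNat p m.factorial + 1 ≤ m
    have h := sub_one_mul_padicValNat_factorial (p := p) m
    have h2 : 2 * padicValNat p m.factorial ≤ (p - 1) * padicValNat p m.factorial :=
      Nat.mul_le_mul_right _ (by omega)
    have h3 := hds m hm
    have h4 := Nat.digit_sum_le p m
    omega
  -- bound function
  set E : ℕ → ℝ := fun m => r ^ (m / 2) with hEdef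
  have hE0 : ∀ m, 0 ≤ E m := fun m => by positivity
  have hE1 : ∀ m, E m ≤ 1 := fun m => pow_le_one₀ hr.le hr1.le
  have hE : ∀ (x : L), ‖x‖ ≤ r → ∀ m, ‖x ^ m / (m.factorial : L)‖ ≤ E m := by
    intro x hx m
    rw [hdivfact, norm_pow]
    calc ‖x‖ ^ m * (p : ℝ) ^ (v m : ℤ) ≤ r ^ m * (p : ℝ) ^ (v m : ℤ) :=
          mul_le_mul_of_nonneg_right (pow_le_pow_left₀ (norm_nonneg x) hx m) (by positivity)
      _ = (p : ℝ) ^ ((v m : ℤ) - m) := by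
          rw [hrzpow, ← zpow_add₀ hpne]
          congr 1
          ring
      _ ≤ (p : ℝ) ^ (-((m / 2 : ℕ) : ℤ)) := hzle _ _ (by
          have := hv2 m
          omega)
      _ = E m := (hrzpow (m / 2)).symm
  have hEt : Tendsto E atTop (𝓝 0) := by
    have h1 : Tendsto (fun j : ℕ => r ^ j) atTop (𝓝 0) :=
      tendsto_pow_atTop_nhds_zero_of_lt_one hr.le hr1
    have h2 : Tendsto (fun m : ℕ => m / 2) atTop atTop := by
      apply tendsto_atTop_atTop_of_monotone (fun a b h => Nat.div_le_div_right h)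
      intro K
      exact ⟨2 * K, by omega⟩
    exact h1.comp h2
  set B : ℕ → ℝ := fun l => E l / r with hBdef
  have hB : Tendsto B atTop (𝓝 0) := by
    have := hEt.div_const r
    rwa [zero_div] at this
  have hEB : ∀ m n : ℕ, E m * E n ≤ B (m + n) := by
    intro m n
    rw [hBdef]
    simp only
    rw [le_div_iff₀ hr]
    have heq : E m * E n * r = r ^ (m / 2 + n / 2 + 1) := by
      rw [hEdef]
      simp only
      rw [pow_add, pow_add, pow_one]
    rw [heq, hEdef]
    exact pow_le_pow_of_le_one hr.le hr1.le (by omega)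
  -- norm < 1 implies ≤ r
  have hlt1 : ∀ x : L, ‖x‖ < 1 → ‖x‖ ≤ r := by
    intro x hx
    rcases eq_or_ne x 0 with rfl | hx0
    · simpa using hr.le
    obtain ⟨j, hj⟩ := hur x hx0
    rw [hj] at hx ⊢
    have hj0 : j ≤ -1 := by
      by_contra hcon
      push_neg at hcon
      have h1 := hzle 0 j (by omega)
      rw [zpow_zero] at h1
      linarith
    calc (p : ℝ) ^ j ≤ (p : ℝ) ^ (-1 : ℤ) := hzle _ _ hj0
      _ = r := by rw [zpow_neg_one, hrdef]
  have hs₀r : ‖s₀‖ ≤ r := hlt1 s₀ hs₀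
  -- summability of coefficient series
  have hsum_c : ∀ (s' : L), ‖s'‖ ≤ r → ∀ n : ℕ,
      Summable (fun m : ℕ => a (m, n) * s' ^ m / (m.factorial : L)) := by
    intro s' hs' n
    apply NonarchimedeanAddGroup.summable_of_tendsto_cofinite_zero
    rw [Nat.cofinite_eq_atTop, tendsto_zero_iff_norm_tendsto_zero]
    refine squeeze_zero (fun m => norm_nonneg _) (fun m => ?_) hEt
    have heq : a (m, n) * s' ^ m / (m.factorial : L)
        = a (m, n) * (s' ^ m / (m.factorial : L)) := by ring
    rw [heq, norm_mul]
    calc ‖a (m, n)‖ * ‖s' ^ m / (m.factorial : L)‖ ≤ 1 * E m :=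
          mul_le_mul (ha _) (hE s' hs' m) (norm_nonneg _) zero_le_one
      _ = E m := one_mul _
  -- choose the uniform bound
  refine ⟨2 * (k + n₀), ?_⟩
  intro s hs1 hs2
  have hsr : ‖s‖ ≤ r := hlt1 s hs1
  set c : ℕ → L := fun n => ∑' m : ℕ, a (m, n) * s ^ m / (m.factorial : L) with hcdef
  set b : ℕ → L := fun n => c n * ((n.factorial : L))⁻¹ with hbdef
  -- coefficients bounded by 1
  have hc1 : ∀ n, ‖c n‖ ≤ 1 := by
    intro n
    refine IsUltrametricDist.norm_tsum_le_of_forall_le_of_nonneg zero_le_one fun m => ?_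
    have heq : a (m, n) * s ^ m / (m.factorial : L)
        = a (m, n) * (s ^ m / (m.factorial : L)) := by ring
    rw [heq, norm_mul]
    calc ‖a (m, n)‖ * ‖s ^ m / (m.factorial : L)‖ ≤ 1 * 1 :=
          mul_le_mul (ha _) ((hE s hsr m).trans (hE1 m)) (norm_nonneg _) zero_le_one
      _ = 1 := one_mul _
  -- difference estimate
  have hcdiff : ∀ n : ℕ, ‖c n - (∑' m : ℕ, a (m, n) * s₀ ^ m / (m.factorial : L))‖
      ≤ (p : ℝ) ^ (-(k : ℤ)) := by
    intro n
    rw [hcdef]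
    simp only
    rw [← (hsum_c s hsr n).tsum_sub (hsum_c s₀ hs₀r n)]
    refine IsUltrametricDist.norm_tsum_le_of_forall_le_of_nonneg (by positivity) fun m => ?_
    match m with
    | 0 => simp [zpow_nonneg hpR0.le]
    | m' + 1 =>
      have heq : a (m' + 1, n) * s ^ (m' + 1) / ((m' + 1).factorial : L)
          - a (m' + 1, n) * s₀ ^ (m' + 1) / ((m' + 1).factorial : L)
          = a (m' + 1, n) * (s ^ (m' + 1) - s₀ ^ (m' + 1)) / (((m' + 1).factorial : L)) := by
        ring
      rw [heq, hdivfact]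
      have hgeom : s ^ (m' + 1) - s₀ ^ (m' + 1)
          = (∑ i ∈ Finset.range (m' + 1), s ^ i * s₀ ^ (m' + 1 - 1 - i)) * (s - s₀) :=
        (geom_sum₂_mul s s₀ (m' + 1)).symm
      have hgeobd : ‖∑ i ∈ Finset.range (m' + 1), s ^ i * s₀ ^ (m' + 1 - 1 - i)‖ ≤ r ^ m' := by
        refine IsUltrametricDist.norm_sum_le_of_forall_le_of_nonneg (by positivity) fun i hi => ?_
        rw [Finset.mem_range] at hi
        rw [norm_mul, norm_pow, norm_pow]
        calc ‖s‖ ^ i * ‖s₀‖ ^ (m' + 1 - 1 - i) ≤ r ^ i * r ^ (m' + 1 - 1 - i) :=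
              mul_le_mul (pow_le_pow_left₀ (norm_nonneg s) hsr i)
                (pow_le_pow_left₀ (norm_nonneg s₀) hs₀r _) (by positivity) (by positivity)
          _ = r ^ m' := by
              rw [← pow_add]
              congr 1
              omega
      calc ‖a (m' + 1, n) * (s ^ (m' + 1) - s₀ ^ (m' + 1))‖ * (p : ℝ) ^ (v (m' + 1) : ℤ)
          = ‖a (m' + 1, n)‖ * (‖∑ i ∈ Finset.range (m' + 1), s ^ i * s₀ ^ (m' + 1 - 1 - i)‖
              * ‖s - s₀‖) * (p : ℝ) ^ (v (m' + 1) : ℤ) := by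
            rw [hgeom, norm_mul, norm_mul]
        _ ≤ 1 * (r ^ m' * (p : ℝ) ^ (-(k : ℤ))) * (p : ℝ) ^ (v (m' + 1) : ℤ) := by
            have h1 : ‖∑ i ∈ Finset.range (m' + 1), s ^ i * s₀ ^ (m' + 1 - 1 - i)‖ * ‖s - s₀‖
                ≤ r ^ m' * (p : ℝ) ^ (-(k : ℤ)) :=
              mul_le_mul hgeobd hs2 (norm_nonneg _) (by positivity)
            have h2 := mul_le_mul (ha (m' + 1, n)) h1 (by positivity) zero_le_one
            exact mul_le_mul_of_nonneg_right h2 (by positivity)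
        _ = (p : ℝ) ^ ((v (m' + 1) : ℤ) - m' - k) := by
            rw [one_mul, hrzpow m', ← zpow_add₀ hpne, ← zpow_add₀ hpne]
            congr 1
            ring
        _ ≤ (p : ℝ) ^ (-(k : ℤ)) := hzle _ _ (by
            have := hv1 (m' + 1) (by omega)
            omega)
  -- lower bound on the special coefficient
  have hclow : (p : ℝ) ^ (-(k : ℤ)) < ‖c n₀‖ := by
    have hd := hcdiff n₀
    have hsplitc : c n₀ = (∑' m : ℕ, a (m, n₀) * s₀ ^ m / (m.factorial : L))
        + (c n₀ - ∑' m : ℕ, a (m, n₀) * s₀ ^ m / (m.factorial : L)) := by ring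
    rw [hsplitc, St8.norm_add_eq_left (lt_of_le_of_lt hd hn₀)]
    exact hn₀
  -- b norms
  have hbnorm : ∀ n, ‖b n‖ = ‖c n‖ * (p : ℝ) ^ (v n : ℤ) := by
    intro n
    rw [hbdef]
    simp only
    rw [norm_mul, norm_inv, hfact, ← zpow_neg, neg_neg]
  have htendb : Tendsto (fun n => ‖b n‖ * r ^ n) atTop (𝓝 0) := by
    refine squeeze_zero (fun n => by positivity) (fun n => ?_) hEt
    rw [hbnorm]
    calc ‖c n‖ * (p : ℝ) ^ (v n : ℤ) * r ^ n ≤ 1 * (p : ℝ) ^ (v n : ℤ) * r ^ n :=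
          mul_le_mul_of_nonneg_right (mul_le_mul_of_nonneg_right (hc1 n) (by positivity))
            (by positivity)
      _ = (p : ℝ) ^ ((v n : ℤ) - n) := by
          rw [one_mul, hrzpow, ← zpow_add₀ hpne]
          congr 1
          try ring
      _ ≤ (p : ℝ) ^ (-((n / 2 : ℕ) : ℤ)) := hzle _ _ (by
          have := hv2 n
          omega)
      _ = E n := (hrzpow (n / 2)).symm
  have hblow : (p : ℝ) ^ (-((k : ℤ) + n₀)) < ‖b n₀‖ * r ^ n₀ := by
    have h1 : (1 : ℝ) ≤ (p : ℝ) ^ (v n₀ : ℤ) := by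
      have := hzle 0 (v n₀ : ℤ) (by positivity)
      rwa [zpow_zero] at this
    calc (p : ℝ) ^ (-((k : ℤ) + n₀)) = (p : ℝ) ^ (-(k : ℤ)) * (p : ℝ) ^ (-(n₀ : ℤ)) := by
          rw [← zpow_add₀ hpne]
          congr 1
          ring
      _ < ‖c n₀‖ * (p : ℝ) ^ (-(n₀ : ℤ)) := by
          apply mul_lt_mul_of_pos_right hclow
          positivity
      _ ≤ (‖c n₀‖ * (p : ℝ) ^ (v n₀ : ℤ)) * (p : ℝ) ^ (-(n₀ : ℤ)) := by
          apply mul_le_mul_of_nonneg_right _ (by positivity)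
          exact le_mul_of_one_le_right (norm_nonneg _) h1
      _ = ‖b n₀‖ * r ^ n₀ := by rw [hbnorm, hrzpow]
  have hbhigh : ∀ m : ℕ, 2 * (k + n₀) < m → ‖b m‖ * r ^ m < (p : ℝ) ^ (-((k : ℤ) + n₀)) := by
    intro m hm
    calc ‖b m‖ * r ^ m = ‖c m‖ * (p : ℝ) ^ (v m : ℤ) * r ^ m := by rw [hbnorm]
      _ ≤ 1 * (p : ℝ) ^ (v m : ℤ) * r ^ m :=
          mul_le_mul_of_nonneg_right (mul_le_mul_of_nonneg_right (hc1 m) (by positivity))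
            (by positivity)
      _ = (p : ℝ) ^ ((v m : ℤ) - m) := by
          rw [one_mul, hrzpow, ← zpow_add₀ hpne]
          congr 1
          try ring
      _ < (p : ℝ) ^ (-((k : ℤ) + n₀)) := hzlt _ _ (by
          have := hv1 m (by omega)
          omega)
  -- pick the top maximizer index
  set N₀ : ℕ := 2 * (k + n₀) with hN₀def
  obtain ⟨nmax, hnmaxmem, hnmaxmax⟩ := Finset.exists_max_image (Finset.range (N₀ + 1))
    (fun n => ‖b n‖ * r ^ n) ⟨0, Finset.mem_range.mpr (by omega)⟩
  set P : ℕ → Prop := fun n => ∀ m, m ≤ N₀ → ‖b m‖ * r ^ m ≤ ‖b n‖ * r ^ n with hPdef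
  haveI : DecidablePred P := fun n => Classical.propDecidable _
  have hPnmax : P nmax := fun m hm => hnmaxmax m (Finset.mem_range.mpr (by omega))
  have hnmaxle : nmax ≤ N₀ := by
    have := Finset.mem_range.mp hnmaxmem
    omega
  set nstar : ℕ := Nat.findGreatest P N₀ with hnstardef
  have hPstar : P nstar := Nat.findGreatest_spec hnmaxle hPnmax
  have hnstarle : nstar ≤ N₀ := Nat.findGreatest_le N₀
  have hstarmax : ∀ m, m ≤ N₀ → ‖b m‖ * r ^ m ≤ ‖b nstar‖ * r ^ nstar := hPstar
  have hstarstrict : ∀ m, nstar < m → ‖b m‖ * r ^ m < ‖b nstar‖ * r ^ nstar := by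
    intro m hm
    rcases le_or_gt m N₀ with h | h
    · by_contra hcon
      push_neg at hcon
      have hPm : P m := fun l hl => (hPstar l hl).trans hcon
      have := Nat.le_findGreatest h hPm
      omega
    · calc ‖b m‖ * r ^ m < (p : ℝ) ^ (-((k : ℤ) + n₀)) := hbhigh m (by omega)
        _ < ‖b n₀‖ * r ^ n₀ := hblow
        _ ≤ ‖b nstar‖ * r ^ nstar := hstarmax n₀ (by omega)
  -- apply Strassman
  obtain ⟨hfinb, hcardb⟩ := St8.strassman hr N₀ b htendb
    ⟨nstar, hnstarle, hstarmax, hstarstrict⟩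
  -- the power series identity
  have hFz : ∀ z : L, ‖z‖ ≤ r →
      (∑' q : ℕ × ℕ, a q * s ^ q.1 * z ^ q.2 / ((q.1.factorial : L) * (q.2.factorial : L)))
      = ∑' n, b n * z ^ n := by
    intro z hz
    set T : ℕ × ℕ → L := fun q =>
      a (q.2, q.1) * s ^ q.2 * z ^ q.1 / (((q.2.factorial : ℕ) : L) * ((q.1.factorial : ℕ) : L))
      with hTdef
    have hTbd : ∀ q : ℕ × ℕ, ‖T q‖ ≤ B (q.1 + q.2) := by
      intro q
      have heq : T q = a (q.2, q.1) * (z ^ q.1 / ((q.1.factorial : ℕ) : L))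
          * (s ^ q.2 / ((q.2.factorial : ℕ) : L)) := by
        rw [hTdef]
        simp only
        ring
      rw [heq, norm_mul, norm_mul]
      calc ‖a (q.2, q.1)‖ * ‖z ^ q.1 / ((q.1.factorial : ℕ) : L)‖
            * ‖s ^ q.2 / ((q.2.factorial : ℕ) : L)‖
          ≤ 1 * E q.1 * E q.2 :=
            mul_le_mul (mul_le_mul (ha _) (hE z hz q.1) (norm_nonneg _) zero_le_one)
              (hE s hsr q.2) (norm_nonneg _) (by positivity)
        _ = E q.1 * E q.2 := by ring
        _ ≤ B (q.1 + q.2) := hEB q.1 q.2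
    have hST : Summable T := St8.summable_of_bound hB hTbd
    have step1 : (∑' q : ℕ × ℕ,
        a q * s ^ q.1 * z ^ q.2 / ((q.1.factorial : L) * (q.2.factorial : L)))
        = ∑' q : ℕ × ℕ, T q := by
      rw [← (Equiv.prodComm ℕ ℕ).tsum_eq (fun q : ℕ × ℕ =>
        a q * s ^ q.1 * z ^ q.2 / ((q.1.factorial : L) * (q.2.factorial : L)))]
      exact tsum_congr fun q => rfl
    have step2 : ∑' q : ℕ × ℕ, T q = ∑' n : ℕ, ∑' m : ℕ, T (n, m) :=
      hST.tsum_prod' fun n => hST.prod_factor n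
    have step3 : ∀ n : ℕ, (∑' m : ℕ, T (n, m)) = b n * z ^ n := by
      intro n
      have heq : ∀ m : ℕ, T (n, m)
          = (a (m, n) * s ^ m / ((m.factorial : ℕ) : L)) * (z ^ n * (((n.factorial : ℕ) : L))⁻¹) := by
        intro m
        rw [hTdef]
        simp only
        ring
      rw [tsum_congr heq, tsum_mul_right, hbdef, hcdef]
      simp only
      ring
    rw [step1, step2, tsum_congr step3]
  -- subset and conclusion
  have hsub : {z : L | ‖z‖ < 1 ∧
      ∑' q : ℕ × ℕ, a q * s ^ q.1 * z ^ q.2 / ((q.1.factorial : L) * (q.2.factorial : L)) = 0}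
      ⊆ {z : L | ‖z‖ ≤ r ∧ ∑' n, b n * z ^ n = 0} := by
    intro z hzmem
    refine ⟨hlt1 z hzmem.1, ?_⟩
    rw [← hFz z (hlt1 z hzmem.1)]
    exact hzmem.2
  have hfinZ : {z : L | ‖z‖ < 1 ∧
      ∑' q : ℕ × ℕ, a q * s ^ q.1 * z ^ q.2 / ((q.1.factorial : L) * (q.2.factorial : L)) = 0}.Finite :=
    hfinb.subset hsub
  refine ⟨⟨hfinZ, (Set.ncard_le_ncard hsub hfinb).trans hcardb⟩, ?_⟩
  -- nonvanishing point
  have hpL : ‖(p : L)‖ = r := by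
    have h1 : ((p : ℕ) : L) = algebraMap ℚ_[p] L ((p : ℕ) : ℚ_[p]) := (map_natCast _ _).symm
    rw [h1, hext]
    exact Padic.norm_p
  have hnormj : ∀ j : ℕ, ‖(p : L) ^ (j + 1)‖ = r ^ (j + 1) := by
    intro j
    rw [norm_pow, hpL]
  have hinj : Function.Injective (fun j : ℕ => (p : L) ^ (j + 1)) := by
    intro i j hij
    simp only at hij
    by_contra hne
    have hnorm : r ^ (i + 1) = r ^ (j + 1) := by
      rw [← hnormj, ← hnormj, hij]
    rcases Nat.lt_or_ge i j with h | h
    · have hlt := pow_lt_pow_right_of_lt_one₀ hr hr1 (Nat.add_lt_add_right h 1)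
      rw [hnorm] at hlt
      exact lt_irrefl _ hlt
    · have h' : j < i := by omega
      have hlt := pow_lt_pow_right_of_lt_one₀ hr hr1 (Nat.add_lt_add_right h' 1)
      rw [hnorm] at hlt
      exact lt_irrefl _ hlt
  have hinf : (Set.range (fun j : ℕ => (p : L) ^ (j + 1))).Infinite :=
    Set.infinite_range_of_injective hinj
  obtain ⟨z, hzmem, hznot⟩ := (hinf.diff hfinZ).nonempty
  obtain ⟨j, rfl⟩ := hzmem
  have hz1 : ‖(p : L) ^ (j + 1)‖ < 1 := by
    rw [hnormj]
    calc r ^ (j + 1) ≤ r ^ 1 := pow_le_pow_of_le_one hr.le hr1.le (by omega)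
      _ = r := pow_one r
      _ < 1 := hr1
  exact ⟨(p : L) ^ (j + 1), hz1, fun h0 => hznot ⟨hz1, h0⟩⟩
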